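/- If G is a graph of order n with k ≤ min(δ(G), δ(Ḡ)) where Ḡ is the complement of G, then γ^r_{×(k−1),t}(G) + γ^r_{×(k−1),t}(Ḡ) ≤ γ^r_{×k,t}(GḠ) ≤ γ^r_{×k,t}(G) + γ^r_{×k,t}(Ḡ), where the lower bound requires k ≥ 2 and the upper bound requires k ≥ 1. -/

import Mathlib

open SimpleGraph

/-- `S` is a `k`-tuple total restrained dominating set of `G`: every vertex has at
least `k` neighbors in `S`, and every vertex outside `S` has at least `k` neighbors
outside `S`. -/
def IsKTRDS {V : Type*} (G : SimpleGraph V) (k : ℕ) (S : Set V) : Prop :=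
  (∀ v : V, k ≤ (S ∩ G.neighborSet v).ncard) ∧
  (∀ v : V, v ∉ S → k ≤ (Sᶜ ∩ G.neighborSet v).ncard)

/-- `S` is a `k`-tuple total dominating set of `G`. -/
def IsKTDS {V : Type*} (G : SimpleGraph V) (k : ℕ) (S : Set V) : Prop :=
  ∀ v : V, k ≤ (S ∩ G.neighborSet v).ncard

/-- The `k`-tuple total restrained domination number of `G`. -/
noncomputable def ktrdNum {V : Type*} (G : SimpleGraph V) (k : ℕ) : ℕ :=
  sInf {m | ∃ S : Set V, IsKTRDS G k S ∧ S.ncard = m}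

/-- The `k`-tuple total domination number of `G`. -/
noncomputable def ktNum {V : Type*} (G : SimpleGraph V) (k : ℕ) : ℕ :=
  sInf {m | ∃ S : Set V, IsKTDS G k S ∧ S.ncard = m}

/-- The `k`-tuple total restrained domatic number of `G`. -/
noncomputable def ktrdDomatic {V : Type*} (G : SimpleGraph V) (k : ℕ) : ℕ :=
  sSup {d | ∃ f : Fin d → Set V, (∀ i, IsKTRDS G k (f i)) ∧ ∀ v : V, ∃! i, v ∈ f i}

/-- The `k`-tuple total domatic number of `G`. -/
noncomputable def ktDomatic {V : Type*} (G : SimpleGraph V) (k : ℕ) : ℕ :=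
  sSup {d | ∃ f : Fin d → Set V, (∀ i, IsKTDS G k (f i)) ∧ ∀ v : V, ∃! i, v ∈ f i}

/-- The complementary prism of `G`: disjoint union of `G` and its complement,
joined by a perfect matching between corresponding vertices. -/
def compPrism {V : Type*} (G : SimpleGraph V) : SimpleGraph (V ⊕ V) where
  Adj x y :=
    match x, y with
    | Sum.inl u, Sum.inl v => G.Adj u v
    | Sum.inr u, Sum.inr v => Gᶜ.Adj u v
    | Sum.inl u, Sum.inr v => u = v
    | Sum.inr u, Sum.inl v => u = v
  symm := by
    constructor
    rintro (u | u) (v | v) h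
    · exact G.adj_symm h
    · exact h.symm
    · exact h.symm
    · exact Gᶜ.adj_symm h
  loopless := by
    constructor
    rintro (u | u) h
    · exact G.irrefl h
    · exact Gᶜ.irrefl h

lemma compPrism_nbhd_inl {V : Type*} (G : SimpleGraph V) (v : V) :
    (compPrism G).neighborSet (Sum.inl v) = Sum.inl '' G.neighborSet v ∪ {Sum.inr v} := by
  ext x
  rcases x with u | u <;>
    simp [compPrism, SimpleGraph.mem_neighborSet, SimpleGraph.Adj, eq_comm]

lemma compPrism_nbhd_inr {V : Type*} (G : SimpleGraph V) (v : V) :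
    (compPrism G).neighborSet (Sum.inr v) = Sum.inr '' Gᶜ.neighborSet v ∪ {Sum.inl v} := by
  ext x
  rcases x with u | u <;>
    simp [compPrism, SimpleGraph.mem_neighborSet, SimpleGraph.Adj, eq_comm]

lemma aux_lower {V W : Type*} [Finite V] [Finite W] {f : V → W}
    (hf : Function.Injective f) {S : Set W} {T : Set V} {x : W} {k : ℕ}
    (h : k ≤ (S ∩ (f '' T ∪ {x})).ncard) :
    k - 1 ≤ ((f ⁻¹' S) ∩ T).ncard := by
  have hsub : S ∩ (f '' T ∪ {x}) ⊆ f '' ((f ⁻¹' S) ∩ T) ∪ {x} := by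
    rintro y ⟨hy, hy2 | hy3⟩
    · obtain ⟨u, hu, rfl⟩ := hy2
      exact Or.inl ⟨u, ⟨hy, hu⟩, rfl⟩
    · exact Or.inr hy3
  have h1 := Set.ncard_le_ncard hsub (Set.toFinite _)
  have h2 := Set.ncard_union_le (f '' ((f ⁻¹' S) ∩ T)) ({x} : Set W)
  rw [Set.ncard_image_of_injective _ hf, Set.ncard_singleton] at h2
  omega

lemma aux_upper {V W : Type*} [Finite V] [Finite W] {f : V → W}
    (hf : Function.Injective f) {S : Set W} {T : Set V} {k : ℕ}
    (hsub : f '' T ⊆ S) (h : k ≤ T.ncard) : k ≤ S.ncard := by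
  calc k ≤ T.ncard := h
    _ = (f '' T).ncard := (Set.ncard_image_of_injective _ hf).symm
    _ ≤ S.ncard := Set.ncard_le_ncard hsub (Set.toFinite _)

theorem stmt_19 {V : Type*} [Fintype V] (G : SimpleGraph V) (k : ℕ)
    (hδG : ∀ v : V, k ≤ (G.neighborSet v).ncard)
    (hδG' : ∀ v : V, k ≤ (Gᶜ.neighborSet v).ncard) :
    (2 ≤ k → ktrdNum G (k - 1) + ktrdNum Gᶜ (k - 1) ≤ ktrdNum (compPrism G) k) ∧
    (1 ≤ k → ktrdNum (compPrism G) k ≤ ktrdNum G k + ktrdNum Gᶜ k) := by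
  constructor
  · intro _
    -- lower bound
    have huniv : IsKTRDS (compPrism G) k Set.univ := by
      constructor
      · rintro (v | v)
        · rw [compPrism_nbhd_inl, Set.univ_inter]
          refine le_trans (aux_upper Sum.inl_injective (S := Sum.inl '' G.neighborSet v ∪ {Sum.inr v}) Set.subset_union_left (hδG v)) le_rfl
        · rw [compPrism_nbhd_inr, Set.univ_inter]
          exact aux_upper Sum.inr_injective (S := Sum.inr '' Gᶜ.neighborSet v ∪ {Sum.inl v}) Set.subset_union_left (hδG' v)
      · intro v hv; exact absurd (Set.mem_univ v) hv
    have hne : {m | ∃ S : Set (V ⊕ V), IsKTRDS (compPrism G) k S ∧ S.ncard = m}.Nonempty :=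
      ⟨(Set.univ : Set (V ⊕ V)).ncard, Set.univ, huniv, rfl⟩
    obtain ⟨S, hS, hScard⟩ := Nat.sInf_mem hne
    set S₁ : Set V := Sum.inl ⁻¹' S with hS₁def
    set S₂ : Set V := Sum.inr ⁻¹' S with hS₂def
    have hS₁ : IsKTRDS G (k - 1) S₁ := by
      constructor
      · intro v
        have h := hS.1 (Sum.inl v)
        rw [compPrism_nbhd_inl] at h
        exact aux_lower Sum.inl_injective h
      · intro v hv
        have h := hS.2 (Sum.inl v) hv
        rw [compPrism_nbhd_inl] at h
        have := aux_lower Sum.inl_injective h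
        simpa [Set.preimage_compl] using this
    have hS₂ : IsKTRDS Gᶜ (k - 1) S₂ := by
      constructor
      · intro v
        have h := hS.1 (Sum.inr v)
        rw [compPrism_nbhd_inr] at h
        exact aux_lower Sum.inr_injective h
      · intro v hv
        have h := hS.2 (Sum.inr v) hv
        rw [compPrism_nbhd_inr] at h
        have := aux_lower Sum.inr_injective h
        simpa [Set.preimage_compl] using this
    have hsplit : S.ncard = S₁.ncard + S₂.ncard := by
      have hSeq : S = Sum.inl '' S₁ ∪ Sum.inr '' S₂ := by
        ext x
        rcases x with u | u <;> simp [hS₁def, hS₂def]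
      rw [hSeq, Set.ncard_union_eq (by
          simp only [Set.disjoint_left]
          rintro x ⟨u, _, rfl⟩ ⟨w, _, h⟩
          exact Sum.inl_ne_inr h.symm) (Set.toFinite _) (Set.toFinite _),
        Set.ncard_image_of_injective _ Sum.inl_injective,
        Set.ncard_image_of_injective _ Sum.inr_injective]
    have h1 : ktrdNum G (k - 1) ≤ S₁.ncard := Nat.sInf_le ⟨S₁, hS₁, rfl⟩
    have h2 : ktrdNum Gᶜ (k - 1) ≤ S₂.ncard := Nat.sInf_le ⟨S₂, hS₂, rfl⟩
    calc ktrdNum G (k - 1) + ktrdNum Gᶜ (k - 1) ≤ S₁.ncard + S₂.ncard := by omega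
      _ = S.ncard := hsplit.symm
      _ = ktrdNum (compPrism G) k := hScard
  · intro _
    -- upper bound
    have hne1 : {m | ∃ S : Set V, IsKTRDS G k S ∧ S.ncard = m}.Nonempty := by
      refine ⟨(Set.univ : Set V).ncard, Set.univ, ⟨?_, ?_⟩, rfl⟩
      · intro v; rw [Set.univ_inter]; exact hδG v
      · intro v hv; exact absurd (Set.mem_univ v) hv
    have hne2 : {m | ∃ S : Set V, IsKTRDS Gᶜ k S ∧ S.ncard = m}.Nonempty := by
      refine ⟨(Set.univ : Set V).ncard, Set.univ, ⟨?_, ?_⟩, rfl⟩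
      · intro v; rw [Set.univ_inter]; exact hδG' v
      · intro v hv; exact absurd (Set.mem_univ v) hv
    obtain ⟨S₁, hS₁, hc₁⟩ := Nat.sInf_mem hne1
    obtain ⟨S₂, hS₂, hc₂⟩ := Nat.sInf_mem hne2
    set S : Set (V ⊕ V) := Sum.inl '' S₁ ∪ Sum.inr '' S₂ with hSdef
    have hmemS : ∀ u : V, (Sum.inl u ∈ S ↔ u ∈ S₁) ∧ (Sum.inr u ∈ S ↔ u ∈ S₂) := by
      intro u; constructor <;> simp [hSdef]
    have hTRDS : IsKTRDS (compPrism G) k S := by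
      constructor
      · rintro (v | v)
        · rw [compPrism_nbhd_inl]
          refine aux_upper Sum.inl_injective ?_ (hS₁.1 v)
          rintro x ⟨u, ⟨hu1, hu2⟩, rfl⟩
          exact ⟨(hmemS u).1.mpr hu1, Or.inl ⟨u, hu2, rfl⟩⟩
        · rw [compPrism_nbhd_inr]
          refine aux_upper Sum.inr_injective ?_ (hS₂.1 v)
          rintro x ⟨u, ⟨hu1, hu2⟩, rfl⟩
          exact ⟨(hmemS u).2.mpr hu1, Or.inl ⟨u, hu2, rfl⟩⟩
      · rintro (v | v) hv
        · rw [compPrism_nbhd_inl]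
          refine aux_upper Sum.inl_injective ?_ (hS₁.2 v (fun h => hv ((hmemS v).1.mpr h)))
          rintro x ⟨u, ⟨hu1, hu2⟩, rfl⟩
          exact ⟨fun h => hu1 ((hmemS u).1.mp h), Or.inl ⟨u, hu2, rfl⟩⟩
        · rw [compPrism_nbhd_inr]
          refine aux_upper Sum.inr_injective ?_ (hS₂.2 v (fun h => hv ((hmemS v).2.mpr h)))
          rintro x ⟨u, ⟨hu1, hu2⟩, rfl⟩
          exact ⟨fun h => hu1 ((hmemS u).2.mp h), Or.inl ⟨u, hu2, rfl⟩⟩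
    have hcard : S.ncard = ktrdNum G k + ktrdNum Gᶜ k := by
      rw [hSdef, Set.ncard_union_eq (by
          simp only [Set.disjoint_left]
          rintro x ⟨u, _, rfl⟩ ⟨w, _, h⟩
          exact Sum.inl_ne_inr h.symm) (Set.toFinite _) (Set.toFinite _),
        Set.ncard_image_of_injective _ Sum.inl_injective,
        Set.ncard_image_of_injective _ Sum.inr_injective, hc₁, hc₂]
      rfl
    exact hcard ▸ Nat.sInf_le ⟨S, hTRDS, rfl⟩
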